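/- Consider the SIR model with R₀ ≥ N/S(0) and a threshold M with I(0) < M < S(0) + I(0). Then I(t) ≤ M for all t ≥ 0 if and only if (N/R₀)·(ln(N/(R₀·S(0))) − 1) − R(0) + N ≤ M. -/
import Mathlib

open Set

private lemma sir_mono_aux {f f' : ℝ → ℝ}
    (hd : ∀ t ≥ (0:ℝ), HasDerivAt f (f' t) t)
    (hnn : ∀ t ≥ (0:ℝ), 0 ≤ f' t) : MonotoneOn f (Set.Ici 0) := by
  apply monotoneOn_of_deriv_nonneg (convex_Ici 0)
  · exact fun t ht => (hd t ht).continuousAt.continuousWithinAt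
  · intro t ht
    rw [interior_Ici] at ht
    exact (hd t (le_of_lt ht)).differentiableAt.differentiableWithinAt
  · intro t ht
    rw [interior_Ici] at ht
    rw [(hd t ht.le).deriv]
    exact hnn t ht.le

private lemma sir_anti_aux {f f' : ℝ → ℝ}
    (hd : ∀ t ≥ (0:ℝ), HasDerivAt f (f' t) t)
    (hnp : ∀ t ≥ (0:ℝ), f' t ≤ 0) : AntitoneOn f (Set.Ici 0) := by
  apply antitoneOn_of_deriv_nonpos (convex_Ici 0)
  · exact fun t ht => (hd t ht).continuousAt.continuousWithinAt
  · intro t ht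
    rw [interior_Ici] at ht
    exact (hd t (le_of_lt ht)).differentiableAt.differentiableWithinAt
  · intro t ht
    rw [interior_Ici] at ht
    rw [(hd t ht.le).deriv]
    exact hnp t ht.le

/-- In the SIR model with R₀ ≥ N/S(0) and I(0) < M < S(0) + I(0),
I(t) ≤ M for all t ≥ 0 if and only if
(N/R₀)·(ln(N/(R₀·S(0))) − 1) − R(0) + N ≤ M. -/
theorem sir_threshold_iff_Imax_le
    (N γ R₀ M : ℝ) (S I R : ℝ → ℝ)
    (hN : 0 < N) (hγ : 0 < γ) (hR₀ : 0 < R₀)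
    (hS' : ∀ t ≥ (0:ℝ), HasDerivAt S (-(γ * R₀ / N) * S t * I t) t)
    (hI' : ∀ t ≥ (0:ℝ), HasDerivAt I ((γ * R₀ / N) * S t * I t - γ * I t) t)
    (hR' : ∀ t ≥ (0:ℝ), HasDerivAt R (γ * I t) t)
    (hSnn : ∀ t ≥ (0:ℝ), 0 ≤ S t) (hInn : ∀ t ≥ (0:ℝ), 0 ≤ I t)
    (hRnn : ∀ t ≥ (0:ℝ), 0 ≤ R t)
    (hsum : ∀ t ≥ (0:ℝ), S t + I t + R t = N)
    (hS0 : 0 < S 0) (hI0 : 0 < I 0)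
    (hR₀ge : R₀ ≥ N / S 0)
    (hM₁ : I 0 < M) (hM₂ : M < S 0 + I 0) :
    (∀ t ≥ (0:ℝ), I t ≤ M) ↔
      (N / R₀) * (Real.log (N / (R₀ * S 0)) - 1) - R 0 + N ≤ M := by
  have hb : (0:ℝ) < N / R₀ := div_pos hN hR₀
  have hc : (0:ℝ) < γ * R₀ / N := by positivity
  have hcb : (γ * R₀ / N) * (N / R₀) = γ := by field_simp
  have hIleN : ∀ t ≥ (0:ℝ), I t ≤ N := fun t ht => by
    nlinarith [hSnn t ht, hRnn t ht, hsum t ht]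
  -- positivity of S
  have hSpos : ∀ t ≥ (0:ℝ), 0 < S t := by
    intro t ht
    have hmono : MonotoneOn (fun u => S u * Real.exp ((γ * R₀ / N) * N * u)) (Set.Ici 0) := by
      apply sir_mono_aux (f' := fun u =>
        (-(γ * R₀ / N) * S u * I u) * Real.exp ((γ * R₀ / N) * N * u)
          + S u * (Real.exp ((γ * R₀ / N) * N * u) * ((γ * R₀ / N) * N)))
      · intro u hu
        have he : HasDerivAt (fun x => Real.exp ((γ * R₀ / N) * N * x))
            (Real.exp ((γ * R₀ / N) * N * u) * ((γ * R₀ / N) * N)) u := by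
          simpa using (((hasDerivAt_id u).const_mul ((γ * R₀ / N) * N)).exp)
        exact (hS' u hu).mul he
      · intro u hu
        have he := Real.exp_pos ((γ * R₀ / N) * N * u)
        nlinarith [hSnn u hu, hIleN u hu, mul_nonneg (mul_nonneg hc.le (hSnn u hu))
          (sub_nonneg.2 (hIleN u hu)), he]
    have h := hmono (self_mem_Ici) (mem_Ici.2 ht) ht
    simp only [mul_zero, Real.exp_zero, mul_one] at h
    nlinarith [Real.exp_pos ((γ * R₀ / N) * N * t), hSnn t ht]
  -- conservation law
  have hVconst : ∀ t ≥ (0:ℝ),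
      S t + I t - (N / R₀) * Real.log (S t) = S 0 + I 0 - (N / R₀) * Real.log (S 0) := by
    intro t ht
    have hV' : ∀ u ∈ Set.Ico (0:ℝ) t, HasDerivWithinAt
        (fun u => S u + I u - (N / R₀) * Real.log (S u)) 0 (Set.Ici u) u := by
      intro u hu
      have hu0 : (0:ℝ) ≤ u := hu.1
      have hlog : HasDerivAt (fun x => Real.log (S x))
          ((-(γ * R₀ / N) * S u * I u) / S u) u := (hS' u hu0).log (hSpos u hu0).ne'
      have hD := ((hS' u hu0).add (hI' u hu0)).sub (hlog.const_mul (N / R₀))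
      have heq : (-(γ * R₀ / N) * S u * I u + ((γ * R₀ / N) * S u * I u - γ * I u))
          - (N / R₀) * ((-(γ * R₀ / N) * S u * I u) / S u) = 0 := by
        have hSne : S u ≠ 0 := (hSpos u hu0).ne'
        field_simp
        ring
      rw [heq] at hD
      exact hD.hasDerivWithinAt
    have hcont : ContinuousOn (fun u => S u + I u - (N / R₀) * Real.log (S u))
        (Set.Icc 0 t) := by
      intro x hx
      have hx0 : (0:ℝ) ≤ x := hx.1
      exact (((hS' x hx0).add (hI' x hx0)).sub
        (((hS' x hx0).log (hSpos x hx0).ne').const_mul (N / R₀))).continuousAt.continuousWithinAt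
    exact constant_of_has_deriv_right_zero hcont hV' t (right_mem_Icc.2 ht)
  -- maximization of b * log s - s at s = b
  have hkey : ∀ s : ℝ, 0 < s →
      (N / R₀) * Real.log s - s ≤ (N / R₀) * Real.log (N / R₀) - (N / R₀) := by
    intro s hs
    have h1 := Real.log_le_sub_one_of_pos (div_pos hs hb)
    rw [Real.log_div hs.ne' hb.ne'] at h1
    have h2 := mul_le_mul_of_nonneg_left h1 hb.le
    have h3 : s / (N / R₀) * (N / R₀) = s := div_mul_cancel₀ s hb.ne'
    nlinarith [h2, h3]
  -- RHS rewriting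
  have hRHS : (N / R₀) * (Real.log (N / (R₀ * S 0)) - 1) - R 0 + N
      = S 0 + I 0 + (N / R₀) * (Real.log (N / R₀) - Real.log (S 0)) - (N / R₀) := by
    have h0 := hsum 0 le_rfl
    have hdd : N / (R₀ * S 0) = (N / R₀) / S 0 := by rw [div_div]
    rw [hdd, Real.log_div hb.ne' hS0.ne']
    ring_nf
    linarith [h0]
  -- I t is bounded by Imax
  have hIle_max : ∀ t ≥ (0:ℝ),
      I t ≤ S 0 + I 0 + (N / R₀) * (Real.log (N / R₀) - Real.log (S 0)) - (N / R₀) := by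
    intro t ht
    have hV := hVconst t ht
    have hk := hkey (S t) (hSpos t ht)
    nlinarith [hV, hk]
  have hS0b : N / R₀ ≤ S 0 := by
    rw [div_le_iff₀ hR₀]
    have := (div_le_iff₀ hS0).mp hR₀ge
    nlinarith
  constructor
  · intro hIM
    rw [hRHS]
    rcases eq_or_lt_of_le hS0b with heq | hlt
    · rw [← heq]
      simp only [sub_self, mul_zero]
      linarith [hM₁]
    · have hex : ∃ T ≥ (0:ℝ), S T ≤ N / R₀ := by
        by_contra h
        push_neg at h
        have hImono : MonotoneOn I (Set.Ici 0) := by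
          apply sir_mono_aux hI'
          intro u hu
          have h1 : γ ≤ (γ * R₀ / N) * S u := by
            calc γ = (γ * R₀ / N) * (N / R₀) := hcb.symm
            _ ≤ (γ * R₀ / N) * S u := mul_le_mul_of_nonneg_left (h u hu).le hc.le
          nlinarith [mul_nonneg (sub_nonneg.2 h1) (hInn u hu)]
        have hg : AntitoneOn (fun u => S u + γ * I 0 * u) (Set.Ici 0) := by
          apply sir_anti_aux (f' := fun u => -(γ * R₀ / N) * S u * I u + γ * I 0)
          · intro u hu
            exact (hS' u hu).add (((hasDerivAt_id u).const_mul (γ * I 0)).congr_deriv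
              (by ring))
          · intro u hu
            have hI0u : I 0 ≤ I u := hImono self_mem_Ici (mem_Ici.2 hu) hu
            have h1 : γ ≤ (γ * R₀ / N) * S u := by
              calc γ = (γ * R₀ / N) * (N / R₀) := hcb.symm
              _ ≤ (γ * R₀ / N) * S u := mul_le_mul_of_nonneg_left (h u hu).le hc.le
            nlinarith [mul_le_mul h1 hI0u hI0.le (mul_nonneg hc.le (hSnn u hu))]
        have hT : (0:ℝ) ≤ S 0 / (γ * I 0) := by positivity
        have hgle := hg self_mem_Ici (mem_Ici.2 hT) hT
        simp only [mul_zero, add_zero] at hgle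
        have hTS : γ * I 0 * (S 0 / (γ * I 0)) = S 0 := by
          field_simp
        have hST : S (S 0 / (γ * I 0)) ≤ 0 := by linarith [hgle, hTS]
        exact absurd (h _ hT) (by linarith [hb])
      obtain ⟨T, hT0, hTb⟩ := hex
      have hcontS : ContinuousOn S (Set.Icc 0 T) :=
        fun x hx => (hS' x hx.1).continuousAt.continuousWithinAt
      obtain ⟨t₀, ht₀mem, ht₀⟩ := intermediate_value_Icc' hT0 hcontS ⟨hTb, hS0b⟩
      have ht₀0 : (0:ℝ) ≤ t₀ := ht₀mem.1
      have hVt := hVconst t₀ ht₀0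
      rw [ht₀] at hVt
      have hIt := hIM t₀ ht₀0
      linarith [hVt, hIt]
  · intro hle t ht
    rw [hRHS] at hle
    exact le_trans (hIle_max t ht) hle
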